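/- For the multivariate Lomax distribution on ℝ^d with density p(x) ∝ (‖x‖₁ + β)^{−(d+α)} where α > 2, the second moment matrix satisfies E[x xᵀ] = (2β²/((α−1)(α−2))) I_d. -/

import Mathlib

open Real MeasureTheory Set Filter Topology

lemma base_int (s c : ℝ) (hs : 1 < s) (hc : 0 < c) :
    IntegrableOn (fun x : ℝ => (x + c) ^ (-s)) (Ioi 0) ∧
    ∫ x in Ioi (0:ℝ), (x + c) ^ (-s) = c ^ (1 - s) / (s - 1) := by
  have hder : ∀ x ∈ Ioi (0:ℝ), HasDerivAt
      (fun x : ℝ => (x + c) ^ (1 - s) * (-(s - 1)⁻¹)) ((x + c) ^ (-s)) x := by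
    intro x hx
    have hx0 : 0 < x := hx
    have hxc : 0 < x + c := by linarith
    have h1 : HasDerivAt (fun x : ℝ => x + c) 1 x := (hasDerivAt_id x).add_const c
    have h2 := (h1.rpow_const (p := 1 - s) (Or.inl hxc.ne')).mul_const (-(s - 1)⁻¹)
    refine h2.congr_deriv ?_
    rw [show (1 - s - 1) = -s by ring]
    have h3 : s - 1 ≠ 0 := by linarith
    rw [show 1 * (1 - s) * (x + c) ^ (-s) * (-(s - 1)⁻¹)
        = (x + c) ^ (-s) * ((s - 1) * (s - 1)⁻¹) by ring, mul_inv_cancel₀ h3, mul_one]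
  have htend : Tendsto (fun x : ℝ => (x + c) ^ (1 - s) * (-(s - 1)⁻¹)) atTop (𝓝 0) := by
    have ha : Tendsto (fun x : ℝ => x + c) atTop atTop :=
      tendsto_atTop_add_const_right _ c tendsto_id
    have h1 : Tendsto (fun x : ℝ => (x + c) ^ (1 - s)) atTop (𝓝 0) :=
      ((tendsto_rpow_neg_atTop (by linarith : (0:ℝ) < s - 1)).comp ha).congr
        (fun x => by rw [show -(s-1) = 1-s by ring]; rfl)
    have := h1.mul_const (-(s - 1)⁻¹)
    rwa [zero_mul] at this
  have hpos : ∀ x ∈ Ioi (0:ℝ), 0 ≤ (x + c) ^ (-s) := by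
    intro x hx
    have hx0 : 0 < x := hx
    exact rpow_nonneg (by linarith) _
  have hcont : ContinuousWithinAt
      (fun x : ℝ => (x + c) ^ (1 - s) * (-(s - 1)⁻¹)) (Ici 0) 0 := by
    apply ContinuousAt.continuousWithinAt
    have hxc : (0:ℝ) + c ≠ 0 := by positivity
    exact ((continuousAt_id.add continuousAt_const).rpow_const
      (Or.inl hxc)).mul continuousAt_const
  refine ⟨integrableOn_Ioi_deriv_of_nonneg hcont hder hpos htend, ?_⟩
  rw [integral_Ioi_of_hasDerivAt_of_nonneg hcont hder hpos htend]
  rw [zero_add, div_eq_mul_inv]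
  ring

lemma integrable_comp_abs_of {f : ℝ → ℝ} (hf : IntegrableOn (fun x => f |x|) (Ioi 0)) :
    Integrable (fun x => f |x|) := by
  have int_Iic : IntegrableOn (fun x ↦ f |x|) (Iic 0) := by
    rw [← Measure.map_neg_eq_self (volume : Measure ℝ)]
    have m : MeasurableEmbedding fun x : ℝ => -x := (Homeomorph.neg ℝ).measurableEmbedding
    rw [m.integrableOn_map_iff]
    simp_rw [Function.comp_def, abs_neg, neg_preimage, neg_Iic, neg_zero]
    exact (integrableOn_Ici_iff_integrableOn_Ioi).mpr hf
  have h := int_Iic.union hf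
  rwa [Iic_union_Ioi, integrableOn_univ] at h

lemma line_int0 (s c : ℝ) (hs : 1 < s) (hc : 0 < c) :
    Integrable (fun x : ℝ => (|x| + c) ^ (-s)) ∧
    ∫ x : ℝ, (|x| + c) ^ (-s) = 2 * (c ^ (1 - s) / (s - 1)) := by
  obtain ⟨hint, hval⟩ := base_int s c hs hc
  have heq : IntegrableOn (fun x : ℝ => (|x| + c) ^ (-s)) (Ioi 0) :=
    hint.congr_fun (fun x hx => by rw [abs_of_pos hx]) measurableSet_Ioi
  constructor
  · exact integrable_comp_abs_of (f := fun t => (t + c) ^ (-s)) heq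
  · rw [integral_comp_abs (f := fun t => (t + c) ^ (-s)), hval]

lemma base_int2 (s c : ℝ) (hs : 3 < s) (hc : 0 < c) :
    IntegrableOn (fun x : ℝ => x ^ 2 * (x + c) ^ (-s)) (Ioi 0) ∧
    ∫ x in Ioi (0:ℝ), x ^ 2 * (x + c) ^ (-s)
      = 2 * c ^ (3 - s) / ((s - 1) * (s - 2) * (s - 3)) := by
  obtain ⟨i1, v1⟩ := base_int (s - 2) c (by linarith) hc
  obtain ⟨i2, v2⟩ := base_int (s - 1) c (by linarith) hc
  obtain ⟨i3, v3⟩ := base_int s c (by linarith) hc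
  have key : ∀ x ∈ Ioi (0:ℝ), x ^ 2 * (x + c) ^ (-s)
      = (x + c) ^ (-(s - 2)) - (2 * c) * (x + c) ^ (-(s - 1)) + c ^ 2 * (x + c) ^ (-s) := by
    intro x hx
    have hx0 : 0 < x := hx
    have hxc : 0 < x + c := by linarith
    have e2 : (x + c) ^ (-(s - 2)) = (x + c) ^ 2 * (x + c) ^ (-s) := by
      rw [show -(s - 2) = 2 + -s by ring, rpow_add hxc, rpow_two, sq]
    have e1 : (x + c) ^ (-(s - 1)) = (x + c) * (x + c) ^ (-s) := by
      rw [show -(s - 1) = 1 + -s by ring, rpow_add hxc, rpow_one]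
    rw [e1, e2]; ring
  have hcomb : IntegrableOn (fun x : ℝ =>
      (x + c) ^ (-(s - 2)) - (2 * c) * (x + c) ^ (-(s - 1)) + c ^ 2 * (x + c) ^ (-s))
      (Ioi 0) := (i1.sub (i2.const_mul (2 * c))).add (i3.const_mul (c ^ 2))
  constructor
  · exact hcomb.congr_fun (fun x hx => (key x hx).symm) measurableSet_Ioi
  · have iA : IntegrableOn (fun x : ℝ =>
        (x + c) ^ (-(s - 2)) - 2 * c * (x + c) ^ (-(s - 1))) (Ioi 0) :=
      i1.sub (i2.const_mul (2 * c))
    have iB : IntegrableOn (fun x : ℝ => c ^ 2 * (x + c) ^ (-s)) (Ioi 0) :=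
      i3.const_mul (c ^ 2)
    have iC : IntegrableOn (fun x : ℝ => 2 * c * (x + c) ^ (-(s - 1))) (Ioi 0) :=
      i2.const_mul (2 * c)
    rw [setIntegral_congr_fun measurableSet_Ioi key, integral_add iA iB,
      integral_sub i1 iC, integral_const_mul, integral_const_mul,
      v1, v2, v3]
    rw [show (1:ℝ) - (s - 2) = 3 - s by ring, show (1:ℝ) - (s - 1) = 2 - s by ring,
        show s - 2 - 1 = s - 3 by ring, show s - 1 - 1 = s - 2 by ring]
    have p2 : c * c ^ (2 - s) = c ^ (3 - s) := by
      rw [show (3 - s : ℝ) = (2 - s) + 1 by ring, rpow_add_one hc.ne']; ring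
    have p3 : c ^ 2 * c ^ (1 - s) = c ^ (3 - s) := by
      rw [show (3 - s : ℝ) = (1 - s) + 2 by ring, rpow_add hc, rpow_two, sq]; ring
    have q2 : 2 * c * (c ^ (2 - s) / (s - 2)) = 2 * c ^ (3 - s) / (s - 2) := by
      rw [← p2]; ring
    have q3 : c ^ 2 * (c ^ (1 - s) / (s - 1)) = c ^ (3 - s) / (s - 1) := by
      rw [← p3]; ring
    rw [q2, q3]
    have h1 : s - 1 ≠ 0 := by intro h; rw [sub_eq_zero] at h; linarith
    have h2 : s - 2 ≠ 0 := by intro h; rw [sub_eq_zero] at h; linarith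
    have h3 : s - 3 ≠ 0 := by intro h; rw [sub_eq_zero] at h; linarith
    field_simp
    ring

lemma line_int2 (s c : ℝ) (hs : 3 < s) (hc : 0 < c) :
    Integrable (fun x : ℝ => x ^ 2 * (|x| + c) ^ (-s)) ∧
    ∫ x : ℝ, x ^ 2 * (|x| + c) ^ (-s)
      = 4 * c ^ (3 - s) / ((s - 1) * (s - 2) * (s - 3)) := by
  obtain ⟨hint, hval⟩ := base_int2 s c hs hc
  have heq : IntegrableOn (fun x : ℝ => |x| ^ 2 * (|x| + c) ^ (-s)) (Ioi 0) :=
    hint.congr_fun (fun x hx => by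
      have hx0 : (0:ℝ) < x := hx
      simp only [abs_of_pos hx0]) measurableSet_Ioi
  constructor
  · have h1 := integrable_comp_abs_of (f := fun t : ℝ => t ^ 2 * (t + c) ^ (-s)) heq
    exact h1.congr (Filter.Eventually.of_forall fun x => by simp [sq_abs])
  · calc ∫ x : ℝ, x ^ 2 * (|x| + c) ^ (-s)
        = ∫ x : ℝ, (fun t : ℝ => t ^ 2 * (t + c) ^ (-s)) |x| := by
          apply integral_congr_ae
          filter_upwards with x
          simp [sq_abs]
      _ = 2 * ∫ x in Ioi (0:ℝ), x ^ 2 * (x + c) ^ (-s) := integral_comp_abs (f := fun t : ℝ => t ^ 2 * (t + c) ^ (-s))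
      _ = 4 * c ^ (3 - s) / ((s - 1) * (s - 2) * (s - 3)) := by rw [hval]; ring

lemma lomaxJ (n : ℕ) : ∀ (s c : ℝ), (n : ℝ) < s → 0 < c →
    Integrable (fun x : Fin n → ℝ => ((∑ i, |x i|) + c) ^ (-s)) ∧
    ∫ x : Fin n → ℝ, ((∑ i, |x i|) + c) ^ (-s)
      = 2 ^ n * c ^ ((n : ℝ) - s) / ∏ j ∈ Finset.range n, (s - 1 - (j : ℝ)) := by
  induction n with
  | zero =>
    intro s c hs hc
    constructor
    · simp only [Finset.univ_eq_empty, Finset.sum_empty, zero_add, volume_pi]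
      exact integrable_const_iff.2 (Or.inr ⟨by rw [Measure.pi_empty_univ]; exact ENNReal.one_lt_top⟩)
    · simp only [Finset.univ_eq_empty, Finset.sum_empty, zero_add, volume_pi, integral_const,
        Measure.pi_empty_univ, measureReal_def, ENNReal.toReal_one, one_smul, Finset.range_zero,
        Finset.prod_empty, pow_zero, Nat.cast_zero, zero_sub, one_mul, div_one, smul_eq_mul]
  | succ n ih =>
    intro s c hs hc
    have hn : (n : ℝ) < s := by push_cast at hs ⊢; linarith
    have hsn : 1 < s - n := by push_cast at hs; linarith
    set D := ∏ j ∈ Finset.range n, (s - 1 - (j : ℝ)) with hD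
    have hDpos : 0 < D := by
      apply Finset.prod_pos
      intro j hj
      have hj' : (j : ℝ) < n := by exact_mod_cast Finset.mem_range.1 hj
      push_cast at hs; linarith
    set g : ℝ × (Fin n → ℝ) → ℝ :=
      fun p => ((∑ i, |p.2 i|) + (|p.1| + c)) ^ (-s) with hgdef
    have hb : Continuous fun p : ℝ × (Fin n → ℝ) => (∑ i, |p.2 i|) + (|p.1| + c) := by
      apply Continuous.add
      · exact continuous_finset_sum _ fun i _ => ((continuous_apply i).comp continuous_snd).abs
      · exact (continuous_fst.abs).add continuous_const
    have hbpos : ∀ p : ℝ × (Fin n → ℝ), 0 < (∑ i, |p.2 i|) + (|p.1| + c) := by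
      intro p
      have h1 : 0 ≤ ∑ i, |p.2 i| := Finset.sum_nonneg fun i _ => abs_nonneg _
      have h2 : 0 ≤ |p.1| := abs_nonneg _
      linarith
    have hgc : Continuous g := hb.rpow_const fun p => Or.inl (hbpos p).ne'
    -- integrability of g on the product
    have hg_int : Integrable g ((volume : Measure ℝ).prod (volume : Measure (Fin n → ℝ))) := by
      refine (integrable_prod_iff hgc.aestronglyMeasurable).2 ⟨?_, ?_⟩
      · refine Filter.Eventually.of_forall fun y => ?_
        exact (ih s (|y| + c) hn (by positivity)).1
      · apply Integrable.congr
          (((line_int0 (s - n) c hsn hc).1.const_mul (2 ^ n / D)))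
        refine Filter.Eventually.of_forall fun y => ?_
        have hv := (ih s (|y| + c) hn (by positivity)).2
        simp only
        rw [show (fun z : Fin n → ℝ => ‖g (y, z)‖)
            = fun z : Fin n → ℝ => ((∑ i, |z i|) + (|y| + c)) ^ (-s) from
          funext fun z => norm_of_nonneg (rpow_nonneg (hbpos (y, z)).le _), hv]
        rw [show ((n : ℝ) - s) = -(s - n) by ring]
        rw [← hD]
        field_simp
    refine ⟨?_, ?_⟩
    · rw [volume_pi, ← ((measurePreserving_piFinSuccAbove
        (fun _ : Fin (n+1) => (volume : Measure ℝ)) 0).symm).integrable_comp_emb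
        (MeasurableEquiv.measurableEmbedding _)]
      rw [← volume_pi]
      apply hg_int.congr
      refine Filter.Eventually.of_forall fun p => ?_
      simp only [MeasurableEquiv.piFinSuccAbove_symm_apply, Fin.insertNthEquiv,
        Fin.insertNth_zero, Equiv.coe_fn_mk, Function.comp_apply, Fin.sum_univ_succ,
        Fin.zero_succAbove, cast_eq, Fin.cons_zero, Fin.cons_succ, hgdef]
      congr 1
      ring
    · rw [volume_pi, ← ((measurePreserving_piFinSuccAbove
        (fun _ : Fin (n+1) => (volume : Measure ℝ)) 0).symm).integral_comp']
      rw [← volume_pi]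
      rw [show (fun p : ℝ × (Fin n → ℝ) => (fun x : Fin (n+1) → ℝ => ((∑ i, |x i|) + c) ^ (-s))
          ((MeasurableEquiv.piFinSuccAbove (fun _ : Fin (n+1) => ℝ) 0).symm p)) = g from ?_]
      · rw [integral_prod g hg_int]
        have hval : ∀ y : ℝ, ∫ z : Fin n → ℝ, g (y, z)
            = (2 ^ n / D) * (|y| + c) ^ (-(s - (n : ℝ))) := by
          intro y
          have hv := (ih s (|y| + c) hn (by positivity)).2
          simp only [hgdef]
          rw [hv, show ((n : ℝ) - s) = -(s - n) by ring]
          ring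
        rw [integral_congr_ae (Filter.Eventually.of_forall hval)]
        rw [integral_const_mul, (line_int0 (s - n) c hsn hc).2]
        rw [Finset.prod_range_succ]
        have h1 : c ^ (1 - (s - (n:ℝ))) = c ^ ((n:ℝ) + 1 - s) := by ring_nf
        push_cast
        rw [h1]
        have h2 : s - (n:ℝ) - 1 ≠ 0 := by linarith
        have h3 : s - 1 - (n:ℝ) = s - (n:ℝ) - 1 := by ring
        rw [h3]
        rw [← hD]
        field_simp
        ring
      · funext p
        simp only [MeasurableEquiv.piFinSuccAbove_symm_apply, Fin.insertNthEquiv,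
          Fin.insertNth_zero, Equiv.coe_fn_mk, Fin.sum_univ_succ,
          Fin.zero_succAbove, cast_eq, Fin.cons_zero, Fin.cons_succ, hgdef]
        congr 1
        ring

lemma lomaxDiag (n : ℕ) (i : Fin (n+1)) (s c : ℝ) (hs : (n:ℝ) + 3 < s) (hc : 0 < c) :
    Integrable (fun x : Fin (n+1) → ℝ => (x i) ^ 2 * ((∑ j, |x j|) + c) ^ (-s)) ∧
    ∫ x : Fin (n+1) → ℝ, (x i) ^ 2 * ((∑ j, |x j|) + c) ^ (-s)
      = (2 ^ n / ∏ j ∈ Finset.range n, (s - 1 - (j:ℝ))) *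
        (4 * c ^ ((n:ℝ) + 3 - s) /
          ((s - (n:ℝ) - 1) * (s - (n:ℝ) - 2) * (s - (n:ℝ) - 3))) := by
  have hn : (n : ℝ) < s := by linarith
  have hsn : 3 < s - n := by linarith
  set D := ∏ j ∈ Finset.range n, (s - 1 - (j : ℝ)) with hD
  have hDpos : 0 < D := by
    apply Finset.prod_pos
    intro j hj
    have hj' : (j : ℝ) < n := by exact_mod_cast Finset.mem_range.1 hj
    linarith
  set g : ℝ × (Fin n → ℝ) → ℝ :=
    fun p => p.1 ^ 2 * ((∑ j, |p.2 j|) + (|p.1| + c)) ^ (-s) with hgdef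
  have hbpos : ∀ p : ℝ × (Fin n → ℝ), 0 < (∑ j, |p.2 j|) + (|p.1| + c) := by
    intro p
    have h1 : 0 ≤ ∑ j, |p.2 j| := Finset.sum_nonneg fun j _ => abs_nonneg _
    have h2 : 0 ≤ |p.1| := abs_nonneg _
    linarith
  have hb : Continuous fun p : ℝ × (Fin n → ℝ) => (∑ j, |p.2 j|) + (|p.1| + c) := by
    apply Continuous.add
    · exact continuous_finset_sum _ fun j _ => ((continuous_apply j).comp continuous_snd).abs
    · exact (continuous_fst.abs).add continuous_const
  have hgc : Continuous g :=
    (continuous_fst.pow 2).mul (hb.rpow_const fun p => Or.inl (hbpos p).ne')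
  have hg_int : Integrable g ((volume : Measure ℝ).prod (volume : Measure (Fin n → ℝ))) := by
    refine (integrable_prod_iff hgc.aestronglyMeasurable).2 ⟨?_, ?_⟩
    · refine Filter.Eventually.of_forall fun y => ?_
      exact ((lomaxJ n s (|y| + c) hn (by positivity)).1.const_mul (y ^ 2))
    · apply Integrable.congr
        (((line_int2 (s - n) c hsn hc).1.const_mul (2 ^ n / D)))
      refine Filter.Eventually.of_forall fun y => ?_
      have hv := (lomaxJ n s (|y| + c) hn (by positivity)).2
      simp only
      rw [show (fun z : Fin n → ℝ => ‖g (y, z)‖)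
          = fun z : Fin n → ℝ => y ^ 2 * ((∑ j, |z j|) + (|y| + c)) ^ (-s) from
        funext fun z => by
          rw [norm_of_nonneg (by positivity)]]
      rw [integral_const_mul, hv]
      rw [show ((n : ℝ) - s) = -(s - n) by ring]
      rw [← hD]
      field_simp
  have hval2 : ∀ y : ℝ, ∫ z : Fin n → ℝ, g (y, z)
      = (2 ^ n / D) * (y ^ 2 * (|y| + c) ^ (-(s - (n : ℝ)))) := by
    intro y
    have hv := (lomaxJ n s (|y| + c) hn (by positivity)).2
    simp only [hgdef]
    rw [integral_const_mul, hv, show ((n : ℝ) - s) = -(s - n) by ring]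
    ring
  have hfg : ∀ p : ℝ × (Fin n → ℝ),
      ((i.insertNth p.1 p.2 : Fin (n+1) → ℝ) i) ^ 2 *
        ((∑ k, |(i.insertNth p.1 p.2 : Fin (n+1) → ℝ) k|) + c) ^ (-s) = g p := by
    intro p
    rw [Fin.sum_univ_succAbove (fun k => |(i.insertNth p.1 p.2 : Fin (n+1) → ℝ) k|) i]
    simp only [Fin.insertNth_apply_same, Fin.insertNth_apply_succAbove]
    rw [show (|p.1| + ∑ j, |p.2 j|) + c = (∑ j, |p.2 j|) + (|p.1| + c) by ring]
  constructor
  · rw [volume_pi, ← ((measurePreserving_piFinSuccAbove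
      (fun _ : Fin (n+1) => (volume : Measure ℝ)) i).symm).integrable_comp_emb
      (MeasurableEquiv.measurableEmbedding _)]
    rw [← volume_pi]
    apply hg_int.congr
    refine Filter.Eventually.of_forall fun p => ?_
    simp only [MeasurableEquiv.piFinSuccAbove_symm_apply, Fin.insertNthEquiv,
      Equiv.coe_fn_mk, Function.comp_apply]
    exact (hfg p).symm
  · rw [volume_pi, ← ((measurePreserving_piFinSuccAbove
      (fun _ : Fin (n+1) => (volume : Measure ℝ)) i).symm).integral_comp']
    rw [← volume_pi]
    rw [show (fun p : ℝ × (Fin n → ℝ) =>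
        (fun x : Fin (n+1) → ℝ => (x i) ^ 2 * ((∑ j, |x j|) + c) ^ (-s))
        ((MeasurableEquiv.piFinSuccAbove (fun _ : Fin (n+1) => ℝ) i).symm p)) = g from ?_]
    · rw [integral_prod g hg_int]
      rw [integral_congr_ae (Filter.Eventually.of_forall hval2)]
      rw [integral_const_mul, (line_int2 (s - n) c hsn hc).2]
      rw [show (3 : ℝ) - (s - n) = (n : ℝ) + 3 - s by ring]
    · funext p
      simp only [MeasurableEquiv.piFinSuccAbove_symm_apply, Fin.insertNthEquiv,
        Equiv.coe_fn_mk]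
      exact hfg p

lemma Gamma_add_nat' (α : ℝ) (hα : 0 < α) (m : ℕ) :
    Real.Gamma (α + m) = Real.Gamma α * ∏ k ∈ Finset.range m, (α + k) := by
  induction m with
  | zero => simp
  | succ m ihm =>
    have h1 : α + ((m:ℝ) + 1) = (α + m) + 1 := by ring
    have h2 : α + (m:ℝ) ≠ 0 := by positivity
    push_cast
    rw [h1, Real.Gamma_add_one h2]
    push_cast at ihm
    rw [ihm, Finset.prod_range_succ]
    ring

/-- For the multivariate Lomax density p(x) ∝ (‖x‖₁+β)^{-(d+α)} with α > 2,
the second moment matrix is E[x xᵀ] = (2β²/((α-1)(α-2))) I_d. -/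
theorem stmt_4 (d : ℕ) (α β : ℝ) (hα : 2 < α) (hβ : 0 < β) :
    let p : (Fin d → ℝ) → ℝ := fun x =>
      β^α * Real.Gamma (d + α) / (2^d * Real.Gamma α) *
        ((∑ i, |x i|) + β) ^ (-((d:ℝ) + α))
    ∀ i j : Fin d, ∫ x : Fin d → ℝ, x i * x j * p x =
      if i = j then 2*β^2/((α-1)*(α-2)) else 0 := by
  intro p i j
  obtain ⟨n, rfl⟩ : ∃ n, d = n + 1 := ⟨d - 1, by have := i.pos; omega⟩
  set s : ℝ := ((n+1 : ℕ) : ℝ) + α with hs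
  have hαpos : 0 < α := by linarith
  set C : ℝ := β^α * Real.Gamma ((n+1 : ℕ) + α) / (2^(n+1) * Real.Gamma α) with hC
  by_cases hij : i = j
  · subst hij
    rw [if_pos rfl]
    have hcond : (n:ℝ) + 3 < s := by rw [hs]; push_cast; linarith
    obtain ⟨hint, hval⟩ := lomaxDiag n i s β hcond hβ
    have hrw : (fun x : Fin (n+1) → ℝ => x i * x i * p x)
        = fun x : Fin (n+1) → ℝ => C * ((x i) ^ 2 * ((∑ k, |x k|) + β) ^ (-s)) := by
      funext x
      simp only [p, hC, hs]
      push_cast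
      ring
    rw [hrw, integral_const_mul, hval]
    -- now pure algebra with Gamma
    have hGamma : Real.Gamma ((n+1 : ℕ) + α)
        = Real.Gamma α * ∏ k ∈ Finset.range (n+1), (α + k) := by
      rw [add_comm ((n+1 : ℕ) : ℝ) α]
      exact Gamma_add_nat' α hαpos (n+1)
    have hprod1 : ∏ k ∈ Finset.range (n+1), (α + (k:ℝ))
        = (∏ k ∈ Finset.range n, (α + 1 + (k:ℝ))) * α := by
      rw [Finset.prod_range_succ']
      push_cast
      simp only [add_zero]
      congr 1
      apply Finset.prod_congr rfl
      intro k _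
      push_cast
      ring
    have hprodD : (∏ j ∈ Finset.range n, (s - 1 - (j:ℝ)))
        = ∏ k ∈ Finset.range n, (α + 1 + (k:ℝ)) := by
      calc ∏ j ∈ Finset.range n, (s - 1 - (j:ℝ))
          = ∏ j ∈ Finset.range n, (α + 1 + ((n - 1 - j : ℕ) : ℝ)) := by
            apply Finset.prod_congr rfl
            intro j hj
            have hj' : j < n := Finset.mem_range.1 hj
            have hcast : ((n - 1 - j : ℕ) : ℝ) = (n : ℝ) - 1 - j := by
              have h : n - 1 - j = n - (j + 1) := by omega
              rw [h, Nat.cast_sub (by omega)]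
              push_cast; ring
            rw [hcast, hs]
            push_cast
            ring
        _ = ∏ k ∈ Finset.range n, (α + 1 + (k:ℝ)) :=
            Finset.prod_range_reflect (fun k => α + 1 + (k:ℝ)) n
    have hP : 0 < ∏ k ∈ Finset.range n, (α + 1 + (k:ℝ)) :=
      Finset.prod_pos fun k _ => by positivity
    have hGne : Real.Gamma α ≠ 0 := (Real.Gamma_pos_of_pos hαpos).ne'
    have hβ2 : β ^ α * β ^ ((n:ℝ) + 3 - s) = β ^ 2 := by
      rw [← Real.rpow_add hβ, hs]
      push_cast
      rw [show α + ((n:ℝ) + 3 - ((n:ℝ) + 1 + α)) = 2 by ring]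
      rw [show (2:ℝ) = ((2:ℕ):ℝ) by norm_num, Real.rpow_natCast]
    have hsn1 : s - (n:ℝ) - 1 = α := by rw [hs]; push_cast; ring
    have hsn2 : s - (n:ℝ) - 2 = α - 1 := by rw [hs]; push_cast; ring
    have hsn3 : s - (n:ℝ) - 3 = α - 2 := by rw [hs]; push_cast; ring
    rw [hsn1, hsn2, hsn3, hprodD, hC, hGamma, hprod1]
    have h1 : α - 1 ≠ 0 := by intro h; rw [sub_eq_zero] at h; linarith
    have h2 : α - 2 ≠ 0 := by intro h; rw [sub_eq_zero] at h; linarith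
    have h3 : (2:ℝ)^(n+1) ≠ 0 := by positivity
    field_simp
    rw [show β ^ α * 2 ^ n * 4 * β ^ ((n:ℝ) + 3 - s)
        = (β ^ α * β ^ ((n:ℝ) + 3 - s)) * 2 ^ n * 4 by ring, hβ2]
    ring
  · rw [if_neg hij]
    obtain ⟨j', hj'⟩ := Fin.exists_succAbove_eq (Ne.symm hij)
    set g : ℝ × (Fin n → ℝ) → ℝ :=
      fun q => q.1 * q.2 j' * (C * ((∑ k, |q.2 k|) + (|q.1| + β)) ^ (-s)) with hgdef
    have hstep : ∫ x : Fin (n+1) → ℝ, x i * x j * p x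
        = ∫ q : ℝ × (Fin n → ℝ), g q ∂((volume : Measure ℝ).prod (volume : Measure (Fin n → ℝ))) := by
      rw [volume_pi, ← ((measurePreserving_piFinSuccAbove
        (fun _ : Fin (n+1) => (volume : Measure ℝ)) i).symm).integral_comp']
      rw [← volume_pi]
      apply integral_congr_ae
      refine Filter.Eventually.of_forall fun q => ?_
      simp only [MeasurableEquiv.piFinSuccAbove_symm_apply, Fin.insertNthEquiv,
        Equiv.coe_fn_mk, p, hgdef]
      rw [Fin.sum_univ_succAbove (fun k => |(i.insertNth q.1 q.2 : Fin (n+1) → ℝ) k|) i]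
      rw [← hj']
      simp only [Fin.insertNth_apply_same, Fin.insertNth_apply_succAbove]
      rw [show (|q.1| + ∑ k, |q.2 k|) + β = (∑ k, |q.2 k|) + (|q.1| + β) by ring]
    rw [hstep]
    -- oddness in the first coordinate
    have hmp : MeasurePreserving (fun q : ℝ × (Fin n → ℝ) => (-q.1, q.2))
        ((volume : Measure ℝ).prod (volume : Measure (Fin n → ℝ)))
        ((volume : Measure ℝ).prod (volume : Measure (Fin n → ℝ))) :=
      (Measure.measurePreserving_neg (volume : Measure ℝ)).prod (MeasurePreserving.id _)
    have hemb : MeasurableEmbedding (fun q : ℝ × (Fin n → ℝ) => (-q.1, q.2)) :=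
      (((Homeomorph.neg ℝ).toMeasurableEquiv.prodCongr
        (MeasurableEquiv.refl (Fin n → ℝ)))).measurableEmbedding
    have hodd : ∀ q : ℝ × (Fin n → ℝ), g ((-q.1, q.2) : ℝ × (Fin n → ℝ)) = -g q := by
      intro q
      simp only [hgdef, abs_neg]
      ring
    have h1 := hmp.integral_comp hemb g
    have h2 : ∫ q : ℝ × (Fin n → ℝ), g ((fun q : ℝ × (Fin n → ℝ) => (-q.1, q.2)) q)
        ∂((volume : Measure ℝ).prod (volume : Measure (Fin n → ℝ)))
        = -∫ q : ℝ × (Fin n → ℝ), g q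
          ∂((volume : Measure ℝ).prod (volume : Measure (Fin n → ℝ))) := by
      rw [← integral_neg]
      apply integral_congr_ae
      exact Filter.Eventually.of_forall fun q => hodd q
    rw [h2] at h1
    linarith
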